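/- (Lázár's free set theorem, as used in the paper.) Let X be a set of cardinality at least ℵ₂ and let Φ : X → Finset X assign a finite subset of X to each element of X. Then there exists a subset Y of X of cardinality exactly ℵ₂ such that η ∉ Φ(ξ) for all distinct ξ, η ∈ Y. -/

import Mathlib

universe u

open Cardinal Set Ordinal

noncomputable section LazarAux

namespace Lazar

instance (o : Ordinal.{u}) : IsWellOrder o.ToType (· < ·) := isWellOrder_lt

/-- The ordinal `ω₂`. -/
def o2 : Ordinal.{u} := (Cardinal.aleph 2).ord

theorem aleph0_lt_aleph2 : (ℵ₀ : Cardinal.{u}) < Cardinal.aleph 2 := by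
  have := Cardinal.aleph0_le_aleph (1 : Ordinal.{u})
  calc (ℵ₀ : Cardinal.{u}) ≤ Cardinal.aleph 1 := this
    _ < Cardinal.aleph 2 := by
        rw [Cardinal.aleph_lt_aleph]
        exact one_lt_two

theorem isRegular_aleph2 : (Cardinal.aleph 2 : Cardinal.{u}).IsRegular := by
  have h : (2 : Ordinal) = Order.succ 1 := by
    rw [← Ordinal.add_one_eq_succ]; norm_num
  rw [h]
  exact Cardinal.isRegular_aleph_succ 1

theorem cof_o2 : (o2 : Ordinal.{u}).cof = Cardinal.aleph 2 :=
  isRegular_aleph2.cof_eq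

theorem o2_isLimit : Order.IsSuccLimit (o2 : Ordinal.{u}) :=
  Cardinal.isSuccLimit_ord (Cardinal.aleph0_le_aleph 2)

theorem o2_pos : (0 : Ordinal.{u}) < o2 := o2_isLimit.pos

theorem succ_lt_o2 {γ : Ordinal.{u}} (h : γ < o2) : γ + 1 < o2 := by
  rw [Ordinal.add_one_eq_succ]
  exact o2_isLimit.succ_lt h

theorem card_lt_of_lt_o2 {β : Ordinal.{u}} (h : β < o2) : β.card < Cardinal.aleph 2 :=
  Cardinal.lt_ord.1 h

/-- Enumeration of `o2`. -/
noncomputable def en (α : Ordinal.{u}) (h : α < o2) : o2.ToType :=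
  Ordinal.enum (α := o2.ToType) (· < ·) ⟨α, by rwa [type_toType]⟩

/-- Index of an element of `o2.ToType`. -/
noncomputable def tin (i : (o2 : Ordinal.{u}).ToType) : Ordinal.{u} :=
  Ordinal.typein (α := o2.ToType) (· < ·) i

theorem tin_lt (i : (o2 : Ordinal.{u}).ToType) : tin i < o2 := by
  have := Ordinal.typein_lt_type ((· < ·) : o2.ToType → o2.ToType → Prop) i
  rwa [type_toType] at this

theorem tin_en {α : Ordinal.{u}} (h : α < o2) : tin (en α h) = α :=
  Ordinal.typein_enum _ _

theorem en_tin (i : (o2 : Ordinal.{u}).ToType) : en (tin i) (tin_lt i) = i :=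
  Ordinal.enum_typein _ i

theorem tin_injective : Function.Injective (tin : (o2 : Ordinal.{u}).ToType → Ordinal.{u}) :=
  fun i j h => (Ordinal.typein (α := o2.ToType) (· < ·)).injective h

theorem tin_lt_tin {i j : (o2 : Ordinal.{u}).ToType} : tin i < tin j ↔ i < j :=
  Ordinal.typein_lt_typein _

/-- Strict supremum of a set of ordinals. -/
def ssup (s : Set Ordinal.{u}) : Ordinal.{u} := sSup ((· + 1) '' s)

theorem lt_ssup {s : Set Ordinal.{u}} (hs : s.Finite) {γ : Ordinal.{u}} (hγ : γ ∈ s) :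
    γ < ssup s := by
  have h1 : γ + 1 ≤ ssup s :=
    le_csSup (hs.image _).bddAbove (Set.mem_image_of_mem _ hγ)
  calc γ < γ + 1 := by rw [Ordinal.add_one_eq_succ]; exact Order.lt_succ γ
    _ ≤ ssup s := h1

theorem ssup_lt {s : Set Ordinal.{u}} (hs : s.Finite) {b : Ordinal.{u}} (hb : 0 < b)
    (h : ∀ γ ∈ s, γ + 1 < b) : ssup s < b := by
  rcases s.eq_empty_or_nonempty with rfl | hne
  · simpa [ssup] using hb
  · have hmem := Set.Nonempty.csSup_mem (hne.image (· + 1)) (hs.image _)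
    rcases hmem with ⟨γ, hγ, hγe⟩
    have : ssup s = γ + 1 := hγe.symm
    rw [this]
    exact h γ hγ

theorem ssup_le {s : Set Ordinal.{u}} {b : Ordinal.{u}} (h : ∀ γ ∈ s, γ + 1 ≤ b) :
    ssup s ≤ b := by
  apply csSup_le'
  rintro x ⟨γ, hγ, rfl⟩
  exact h γ hγ

section SetMap

variable {X : Type u} (Φ : X → Finset X) (e : (o2 : Ordinal.{u}).ToType → X)

/-- The element of `X` indexed by an ordinal `α < o2`. -/
def xx (α : Ordinal.{u}) : X :=
  if h : α < o2 then e (en α h)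
  else e (Classical.choice (Ordinal.nonempty_toType_iff.2 o2_pos.ne'))

theorem xx_injOn (he : Function.Injective e) :
    Set.InjOn (xx e) (Set.Iio (o2 : Ordinal.{u})) := by
  intro α hα β hβ h
  simp only [xx, dif_pos (show α < o2 from hα), dif_pos (show β < o2 from hβ)] at h
  have h2 : en α hα = en β hβ := he h
  have h3 := congrArg tin h2
  rwa [tin_en hα, tin_en hβ] at h3

/-- The induced set mapping on ordinals below `o2`. -/
def F (α : Ordinal.{u}) : Set Ordinal.{u} :=
  {γ | γ < o2 ∧ xx e γ ∈ Φ (xx e α)}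

theorem F_finite (he : Function.Injective e) (α : Ordinal.{u}) : (F Φ e α).Finite := by
  apply Set.Finite.of_finite_image (f := xx e)
  · apply Set.Finite.subset (Φ (xx e α)).finite_toSet
    rintro x ⟨γ, hγ, rfl⟩
    exact hγ.2
  · exact (xx_injOn e he).mono fun γ hγ => hγ.1

/-- Strict bound for `F α`. -/
def bnd (α : Ordinal.{u}) : Ordinal.{u} := ssup (F Φ e α)

theorem lt_bnd (he : Function.Injective e) {α γ : Ordinal.{u}} (h : γ ∈ F Φ e α) :
    γ < bnd Φ e α := lt_ssup (F_finite Φ e he α) h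

theorem bnd_lt_o2 (he : Function.Injective e) (α : Ordinal.{u}) : bnd Φ e α < o2 :=
  ssup_lt (F_finite Φ e he α) o2_pos fun _ hγ => succ_lt_o2 hγ.1

/-- Strict bound for the part of `F l` below `l`. -/
def phi (l : Ordinal.{u}) : Ordinal.{u} := ssup (F Φ e l ∩ Set.Iio l)

/-- "next" step function: a strict bound above `β` closing off `bnd`. -/
def nxt (β : Ordinal.{u}) : Ordinal.{u} :=
  (β + 1) ⊔ Ordinal.bsup (β + 1) (fun γ _ => bnd Φ e γ)

theorem lt_nxt (β : Ordinal.{u}) : β < nxt Φ e β :=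
  lt_of_lt_of_le (by rw [Ordinal.add_one_eq_succ]; exact Order.lt_succ β) le_sup_left

theorem bnd_le_nxt {γ β : Ordinal.{u}} (h : γ ≤ β) : bnd Φ e γ ≤ nxt Φ e β := by
  refine le_trans ?_ le_sup_right
  exact Ordinal.le_bsup (fun γ _ => bnd Φ e γ) γ
    (lt_of_le_of_lt h (by rw [Ordinal.add_one_eq_succ]; exact Order.lt_succ β))

theorem nxt_lt_o2 (he : Function.Injective e) {β : Ordinal.{u}} (h : β < o2) :
    nxt Φ e β < o2 := by
  apply sup_lt_iff.2
  constructor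
  · exact succ_lt_o2 h
  · apply Ordinal.bsup_lt_ord (c := o2)
    · rw [cof_o2, Ordinal.add_one_eq_succ, Ordinal.card_succ]
      exact Cardinal.add_lt_of_lt (aleph0_lt_aleph2.le) (card_lt_of_lt_o2 h)
        (lt_of_lt_of_le Cardinal.one_lt_aleph0 aleph0_lt_aleph2.le)
    · intro i _
      exact bnd_lt_o2 Φ e he i

/-- Iterating `nxt` from `s`. -/
def cseq (s : Ordinal.{u}) : ℕ → Ordinal.{u}
  | 0 => s
  | n + 1 => nxt Φ e (cseq s n)

/-- Closing limit above `s`. -/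
def L (s : Ordinal.{u}) : Ordinal.{u} := ⨆ n, cseq Φ e s n

theorem cseq_lt_succ (s : Ordinal.{u}) (n : ℕ) : cseq Φ e s n < cseq Φ e s (n + 1) :=
  lt_nxt Φ e _

theorem cseq_strictMono (s : Ordinal.{u}) : StrictMono (cseq Φ e s) :=
  strictMono_nat_of_lt_succ (cseq_lt_succ Φ e s)

theorem cseq_le_L (s : Ordinal.{u}) (n : ℕ) : cseq Φ e s n ≤ L Φ e s :=
  le_ciSup (Ordinal.bddAbove_range _) n

theorem le_L (s : Ordinal.{u}) : s ≤ L Φ e s := cseq_le_L Φ e s 0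

theorem lt_L (s : Ordinal.{u}) : s < L Φ e s :=
  lt_of_lt_of_le (cseq_lt_succ Φ e s 0) (cseq_le_L Φ e s 1)

theorem exists_cseq_gt {s γ : Ordinal.{u}} (h : γ < L Φ e s) : ∃ n, γ < cseq Φ e s n := by
  by_contra hc
  push_neg at hc
  exact absurd (ciSup_le hc : L Φ e s ≤ γ) (not_le.2 h)

theorem L_lt_o2 (he : Function.Injective e) {s : Ordinal.{u}} (h : s < o2) : L Φ e s < o2 := by
  apply Ordinal.iSup_lt_ord_lift
  · rw [Cardinal.mk_nat, Cardinal.lift_aleph0, cof_o2]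
    exact aleph0_lt_aleph2
  · intro n
    induction n with
    | zero => exact h
    | succ n ih => exact nxt_lt_o2 Φ e he ih

/-- Good (closure) points. -/
def P (l : Ordinal.{u}) : Prop :=
  0 < l ∧ ∀ γ < l, bnd Φ e γ ≤ l ∧ γ + 1 < l

theorem P_L (s : Ordinal.{u}) : P Φ e (L Φ e s) := by
  constructor
  · exact lt_of_le_of_lt (zero_le : 0 ≤ s) (lt_L Φ e s)
  · intro γ hγ
    obtain ⟨n, hn⟩ := exists_cseq_gt Φ e hγ
    constructor
    · exact le_trans (bnd_le_nxt Φ e hn.le) (cseq_le_L Φ e s (n + 1))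
    · have h1 : γ + 1 ≤ cseq Φ e s (n + 1) := by
        refine le_trans ?_ (le_sup_left : _ ≤ nxt Φ e (cseq Φ e s n))
        rw [Ordinal.add_one_eq_succ, Ordinal.add_one_eq_succ]
        exact Order.succ_le_succ hn.le
      exact lt_of_le_of_lt h1 (lt_of_lt_of_le (cseq_lt_succ Φ e s (n + 1))
        (cseq_le_L Φ e s (n + 2)))

theorem phi_lt_of_P (he : Function.Injective e) {l : Ordinal.{u}} (hl : P Φ e l) :
    phi Φ e l < l := by
  apply ssup_lt ((F_finite Φ e he l).inter_of_left _) hl.1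
  intro γ hγ
  exact (hl.2 γ hγ.2).2

theorem not_mem_F_of_P (he : Function.Injective e) {l α : Ordinal.{u}} (hl : P Φ e l)
    (hα : α < l) (h : l ∈ F Φ e α) : False := by
  have h1 : l < bnd Φ e α := lt_bnd Φ e he h
  have h2 : bnd Φ e α ≤ l := (hl.2 α hα).1
  exact absurd (lt_of_lt_of_le h1 h2) (lt_irrefl l)

theorem lt_phi (he : Function.Injective e) {l β : Ordinal.{u}} (hβ : β ∈ F Φ e l)
    (hlt : β < l) : β < phi Φ e l :=
  lt_ssup ((F_finite Φ e he l).inter_of_left _) ⟨hβ, hlt⟩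

/-- The main combinatorial lemma: an unbounded set of good points with uniformly
bounded `phi`. -/
theorem exists_unbounded_T (he : Function.Injective e) :
    ∃ γ₀ : Ordinal.{u}, γ₀ < o2 ∧
      ∀ b < (o2 : Ordinal.{u}), ∃ l, (l < o2 ∧ P Φ e l ∧ phi Φ e l ≤ γ₀) ∧ b < l := by
  by_contra hc
  push_neg at hc
  -- every fiber is bounded: choose bounds
  have hbdd : ∀ γ : Ordinal.{u}, ∃ b : Ordinal.{u}, γ < o2 →
      (b < o2 ∧ ∀ l, l < o2 → P Φ e l → phi Φ e l ≤ γ → l ≤ b) := by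
    intro γ
    by_cases hγ : γ < o2
    · obtain ⟨b, hb, hball⟩ := hc γ hγ
      exact ⟨b, fun _ => ⟨hb, fun l h1 h2 h3 => not_lt.1 fun hlt => by
        exact absurd (hball l ⟨h1, h2, h3⟩) (not_le.2 hlt)⟩⟩
    · exact ⟨0, fun h => absurd h hγ⟩
  choose h hh using hbdd
  -- the sup-of-bounds function
  set H : Ordinal.{u} → Ordinal.{u} := fun β => Ordinal.bsup β (fun γ _ => h γ) with hH
  have hHle : ∀ {γ β : Ordinal.{u}}, γ < β → h γ ≤ H β := fun {γ β} hγ =>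
    Ordinal.le_bsup (fun γ _ => h γ) γ hγ
  have hHlt : ∀ {β : Ordinal.{u}}, β < o2 → H β < o2 := by
    intro β hβ
    apply Ordinal.bsup_lt_ord (c := o2)
    · rw [cof_o2]; exact card_lt_of_lt_o2 hβ
    · intro γ hγ
      by_cases hγ2 : γ < o2
      · exact (hh γ hγ2).1
      · exact absurd (hγ.trans hβ) hγ2
  -- diagonal sequence
    -- d 0 = 0, d (n+1) = L ((d n ⊔ H (d n)) + 1)
  set d : ℕ → Ordinal.{u} := fun n =>
    Nat.rec 0 (fun _ ih => L Φ e ((ih ⊔ H ih) + 1)) n with hd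
  have hd0 : d 0 = 0 := rfl
  have hds : ∀ n, d (n + 1) = L Φ e ((d n ⊔ H (d n)) + 1) := fun n => rfl
  have hdlt : ∀ n, d n < o2 := by
    intro n
    induction n with
    | zero => exact o2_pos
    | succ n ih =>
        rw [hds]
        exact L_lt_o2 Φ e he (succ_lt_o2 (sup_lt_iff.2 ⟨ih, hHlt ih⟩))
  have hdmono : ∀ n, d n < d (n + 1) := by
    intro n
    rw [hds]
    calc d n ≤ d n ⊔ H (d n) := le_sup_left
      _ < (d n ⊔ H (d n)) + 1 := by
          rw [Ordinal.add_one_eq_succ]; exact Order.lt_succ _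
      _ ≤ L Φ e ((d n ⊔ H (d n)) + 1) := le_L Φ e _
  set δ : Ordinal.{u} := ⨆ n, d n with hδ
  have hdleδ : ∀ n, d n ≤ δ := fun n => le_ciSup (Ordinal.bddAbove_range _) n
  have hδlt : δ < o2 := by
    apply Ordinal.iSup_lt_ord_lift
    · rw [Cardinal.mk_nat, Cardinal.lift_aleph0, cof_o2]
      exact aleph0_lt_aleph2
    · exact hdlt
  have hex : ∀ {γ : Ordinal.{u}}, γ < δ → ∃ n, γ < d n := by
    intro γ hγ
    by_contra hcon
    push_neg at hcon
    exact absurd (ciSup_le hcon : δ ≤ γ) (not_le.2 hγ)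
  have hPδ : P Φ e δ := by
    constructor
    · exact lt_of_le_of_lt (zero_le : 0 ≤ d 0) (lt_of_lt_of_le (hdmono 0) (hdleδ 1))
    · intro γ hγ
      obtain ⟨n, hn⟩ := hex hγ
      have hn' : γ < d (n + 1) := hn.trans (hdmono n)
      have hP : P Φ e (d (n + 1)) := by rw [hds]; exact P_L Φ e _
      exact ⟨(hP.2 γ hn').1.trans (hdleδ (n + 1)),
        lt_of_lt_of_le (hP.2 γ hn').2 (hdleδ (n + 1))⟩
  -- pressing down at δ
  have hφ : phi Φ e δ < δ := phi_lt_of_P Φ e he hPδ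
  set γs : Ordinal.{u} := phi Φ e δ with hγs
  have hγso2 : γs < o2 := hφ.trans hδlt
  have hδle : δ ≤ h γs := (hh γs hγso2).2 δ hδlt hPδ le_rfl
  obtain ⟨n, hn⟩ := hex hφ
  have : h γs ≤ d (n + 1) := by
    rw [hds]
    calc h γs ≤ H (d n) := hHle hn
      _ ≤ d n ⊔ H (d n) := le_sup_right
      _ ≤ (d n ⊔ H (d n)) + 1 := le_of_lt (by
          rw [Ordinal.add_one_eq_succ]; exact Order.lt_succ _)
      _ ≤ L Φ e _ := le_L Φ e _
  have hlt : h γs < δ :=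
    lt_of_le_of_lt this (lt_of_lt_of_le (hdmono (n + 1)) (hdleδ (n + 2)))
  exact absurd (hδle.trans_lt hlt) (lt_irrefl δ)

/-- The free unbounded set of ordinals. -/
theorem exists_free_unbounded (he : Function.Injective e) :
    ∃ S : Set Ordinal.{u}, (∀ l ∈ S, l < o2) ∧
      (∀ b < (o2 : Ordinal.{u}), ∃ l ∈ S, b < l) ∧
      (∀ α ∈ S, ∀ β ∈ S, α ≠ β → β ∉ F Φ e α) := by
  obtain ⟨γ₀, hγ₀, hT⟩ := exists_unbounded_T Φ e he
  refine ⟨{l | (l < o2 ∧ P Φ e l ∧ phi Φ e l ≤ γ₀) ∧ γ₀ < l}, fun l hl => hl.1.1, ?_, ?_⟩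
  · intro b hb
    obtain ⟨l, hl, hbl⟩ := hT (b ⊔ γ₀) (sup_lt_iff.2 ⟨hb, hγ₀⟩)
    exact ⟨l, ⟨hl, lt_of_le_of_lt le_sup_right hbl⟩, lt_of_le_of_lt le_sup_left hbl⟩
  · rintro α ⟨⟨hαo2, hPα, hφα⟩, hγα⟩ β ⟨⟨hβo2, hPβ, hφβ⟩, hγβ⟩ hne hmem
    rcases lt_or_gt_of_ne hne with hlt | hlt
    · exact not_mem_F_of_P Φ e he hPβ hlt hmem
    · -- β < α and β ∈ F α : β < phi α ≤ γ₀ < β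
      have := lt_phi Φ e he hmem hlt
      exact absurd ((this.trans_le hφα).trans hγβ) (lt_irrefl β)

end SetMap

end Lazar

end LazarAux

/-- **Lázár's free set theorem.** If `|X| ≥ ℵ₂` and `Φ` assigns a finite subset of `X`
to each element of `X`, then there is `Y ⊆ X` with `|Y| = ℵ₂` such that `η ∉ Φ(ξ)`
for all distinct `ξ, η ∈ Y`. -/
theorem lazar_free_set {X : Type u} (hX : Cardinal.aleph 2 ≤ Cardinal.mk X)
    (Φ : X → Finset X) :
    ∃ Y : Set X, Cardinal.mk Y = Cardinal.aleph 2 ∧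
      ∀ ξ ∈ Y, ∀ η ∈ Y, ξ ≠ η → η ∉ Φ ξ := by
  classical
  -- embed the canonical type of cardinality ℵ₂ into X
  have hmk : #(Lazar.o2 : Ordinal.{u}).ToType = Cardinal.aleph 2 :=
    Cardinal.mk_ord_toType _
  obtain ⟨e⟩ : Nonempty ((Lazar.o2 : Ordinal.{u}).ToType ↪ X) := by
    rw [← Cardinal.le_def, hmk]; exact hX
  have he : Function.Injective e := e.injective
  obtain ⟨S, hSlt, hSub, hSfree⟩ := Lazar.exists_free_unbounded Φ e he
  -- transfer `S` into `o2.ToType`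
  set A : Set (Lazar.o2 : Ordinal.{u}).ToType := {i | Lazar.tin i ∈ S} with hA
  -- A is unbounded, so it has size at least ℵ₂
  have hAunb : Set.Unbounded (· < ·) A := by
    intro i
    obtain ⟨l, hlS, hl⟩ := hSub _ (Lazar.tin_lt i)
    have hlo2 : l < Lazar.o2 := hSlt l hlS
    refine ⟨Lazar.en l hlo2, ?_, ?_⟩
    · show Lazar.tin _ ∈ S
      rwa [Lazar.tin_en]
    · intro hcon
      rw [← Lazar.tin_lt_tin, Lazar.tin_en] at hcon
      exact absurd (hl.trans hcon) (lt_irrefl _)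
  have hAcard : Cardinal.aleph 2 ≤ #A := by
    have this : Order.cof (Lazar.o2 : Ordinal.{u}).ToType ≤ #A :=
      Order.cof_le fun i => (hAunb i).imp fun j hj => ⟨hj.1, not_lt.1 hj.2⟩
    rwa [Ordinal.cof_toType, Lazar.cof_o2] at this
  -- push into X
  have hY0 : Cardinal.aleph 2 ≤ #(e '' A : Set X) := by
    rwa [Cardinal.mk_image_eq he]
  -- freeness of e '' A
  have hY0free : ∀ ξ ∈ e '' A, ∀ η ∈ e '' A, ξ ≠ η → η ∉ Φ ξ := by
    rintro ξ ⟨i, hi, rfl⟩ η ⟨j, hj, rfl⟩ hne hmem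
    set α : Ordinal.{u} := Lazar.tin i with hα
    set β : Ordinal.{u} := Lazar.tin j with hβ
    have hαS : α ∈ S := hi
    have hβS : β ∈ S := hj
    have hαβ : α ≠ β := by
      intro hcon
      exact hne (by rw [show i = j from Lazar.tin_injective hcon])
    apply hSfree α hαS β hβS hαβ
    -- β ∈ F α
    have hαo2 : α < Lazar.o2 := hSlt α hαS
    have hβo2 : β < Lazar.o2 := hSlt β hβS
    have hxxα : Lazar.xx e α = e i := by
      rw [Lazar.xx, dif_pos hαo2]
      exact congrArg e (Lazar.tin_injective (by rw [Lazar.tin_en, hα]))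
    have hxxβ : Lazar.xx e β = e j := by
      rw [Lazar.xx, dif_pos hβo2]
      exact congrArg e (Lazar.tin_injective (by rw [Lazar.tin_en, hβ]))
    exact ⟨hβo2, by rw [hxxα, hxxβ]; exact hmem⟩
  -- extract a subset of size exactly ℵ₂
  obtain ⟨p, hp⟩ := Cardinal.le_mk_iff_exists_set.1 hY0
  refine ⟨Subtype.val '' p, ?_, ?_⟩
  · rw [Cardinal.mk_image_eq Subtype.val_injective, hp]
  · rintro ξ ⟨ξ', hξ', rfl⟩ η ⟨η', hη', rfl⟩ hne hmem
    exact hY0free ξ' ξ'.2 η' η'.2 (fun h => hne (by rw [h])) hmem
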